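/- arXiv:0809.4734 — 4 statements merged into one kernel-verified Lean document; each statement's English description precedes it below -/
import Mathlib

section
/- Let G be an infinite abelian profinite group that is a torsion group (every element has finite order). Then the set of closed subgroups of G has cardinality at least 2^{ℵ₀}. -/
open scoped Pointwise

universe u

/-- A topological isomorphism between topological groups: a group isomorphism which is
also a homeomorphism. -/
def TopIso (G : Type*) (H : Type*) [Group G] [TopologicalSpace G] [Group H]
    [TopologicalSpace H] : Prop :=
  ∃ e : G ≃* H, Continuous e ∧ Continuous e.symm

/-- The set of closed subgroups of a topological group `G`. -/
def ClosedSubgroupSpace (G : Type u) [Group G] [TopologicalSpace G] : Type u :=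
  {H : Subgroup G // IsClosed (H : Set G)}

/-- The subgroup-space topology on the set of closed subgroups: for each closed subgroup `H`
the sets `B(H,N) = {K closed | KN = HN}`, as `N` ranges over open normal subgroups of `G`,
form a base of neighbourhoods of `H`. -/
instance ClosedSubgroupSpace.instTopologicalSpace (G : Type u) [Group G] [TopologicalSpace G] :
    TopologicalSpace (ClosedSubgroupSpace G) :=
  TopologicalSpace.generateFrom
    {S | ∃ (H : ClosedSubgroupSpace G) (N : Subgroup G), N.Normal ∧ IsOpen (N : Set G) ∧
      S = {K : ClosedSubgroupSpace G |
            (K.1 : Set G) * (N : Set G) = (H.1 : Set G) * (N : Set G)}}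

/-- The set of closed normal subgroups, with the subspace topology from the subgroup space. -/
def NormalClosedSubgroupSpace (G : Type u) [Group G] [TopologicalSpace G] : Type u :=
  {H : ClosedSubgroupSpace G // (H.1 : Subgroup G).Normal}

instance NormalClosedSubgroupSpace.instTopologicalSpace (G : Type u) [Group G]
    [TopologicalSpace G] : TopologicalSpace (NormalClosedSubgroupSpace G) :=
  instTopologicalSpaceSubtype

/-- A topological group is pronilpotent if all of its finite continuous quotients are
nilpotent, i.e. all quotients by open normal subgroups are nilpotent. -/
def IsPronilpotent (G : Type*) [Group G] [TopologicalSpace G] : Prop :=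
  ∀ (N : Subgroup G) [N.Normal], IsOpen (N : Set G) → Group.IsNilpotent (G ⧸ N)

/-- A topological group is pro-`p` if all of its finite continuous quotients are `p`-groups,
i.e. all quotients by open normal subgroups are `p`-groups. -/
def IsProP (p : ℕ) (G : Type*) [Group G] [TopologicalSpace G] : Prop :=
  ∀ (N : Subgroup G) [N.Normal], IsOpen (N : Set G) → IsPGroup p (G ⧸ N)

/-- A topological group is topologically finitely generated if it has a finitely generated
dense subgroup. -/
def IsTopologicallyFG (G : Type*) [Group G] [TopologicalSpace G] [IsTopologicalGroup G] : Prop :=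
  ∃ S : Set G, S.Finite ∧ (Subgroup.closure S).topologicalClosure = ⊤

/-- The Frattini subgroup of a topological group: the intersection of all maximal proper
open subgroups. -/
def frattiniOpen (G : Type*) [Group G] [TopologicalSpace G] : Subgroup G :=
  sInf {M : Subgroup G | IsOpen (M : Set G) ∧ M ≠ ⊤ ∧ ∀ K : Subgroup G, M < K → K = ⊤}

/-- The character of a topological space at a point: the least cardinality of a base of
neighbourhoods of the point. -/
noncomputable def charAt (X : Type u) [TopologicalSpace X] (x : X) : Cardinal.{u} :=
  sInf {c | ∃ B : Set (Set X), Cardinal.mk B = c ∧ (∀ U ∈ B, U ∈ nhds x) ∧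
    ∀ V ∈ nhds x, ∃ U ∈ B, U ⊆ V}

/-- The weight of a topological space: the least cardinality of a base for its topology. -/
noncomputable def tweight (X : Type u) [TopologicalSpace X] : Cardinal.{u} :=
  sInf {c | ∃ B : Set (Set X), Cardinal.mk B = c ∧ TopologicalSpace.IsTopologicalBasis B}

set_option linter.unusedSectionVars false
section Aux2

open Cardinal

variable {G : Type u} [CommGroup G] [TopologicalSpace G] [IsTopologicalGroup G]
  [CompactSpace G] [T2Space G] [TotallyDisconnectedSpace G]

lemma my_step_exists [Infinite G] (H : Subgroup G) (hH : IsOpen (H : Set G)) :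
    ∃ H' : Subgroup G, IsOpen ((H' : Subgroup G) : Set G) ∧ H' < H := by
  haveI : Finite (G ⧸ H) := Subgroup.quotient_finite_of_isOpen H hH
  have hInfH : Infinite H := by
    by_contra hfin
    rw [not_infinite_iff_finite] at hfin
    have : Finite ((G ⧸ H) × H) := inferInstance
    haveI : Finite G := Finite.of_equiv _ (Subgroup.groupEquivQuotientProdSubgroup (s := H)).symm
    exact not_finite G
  obtain ⟨a, b, hab⟩ := exists_pair_ne H
  have hx : (a * b⁻¹ : G) ∈ H := H.mul_mem a.2 (H.inv_mem b.2)
  have hx1 : (a * b⁻¹ : G) ≠ 1 := by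
    intro hcon
    apply hab
    ext
    exact mul_inv_eq_one.mp hcon
  obtain ⟨W, hW, h1W, hWsub⟩ := compact_exists_isClopen_in_isOpen
    (isOpen_compl_singleton (x := (a * b⁻¹ : G))) (by simpa using (Ne.symm hx1))
  obtain ⟨M, hM⟩ := IsTopologicalGroup.exist_openSubgroup_sub_clopen_nhds_of_one hW h1W
  refine ⟨H ⊓ M.toSubgroup, ?_, ?_⟩
  · rw [Subgroup.coe_inf]
    exact hH.inter M.isOpen
  · refine lt_of_le_of_ne inf_le_left fun hcon => ?_
    have : (a * b⁻¹ : G) ∈ H ⊓ M.toSubgroup := by rw [hcon]; exact hx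
    exact hWsub (hM this.2) rfl

lemma my_exists_chain [Infinite G] : ∃ N : ℕ → Subgroup G,
    (∀ n, IsOpen ((N n : Subgroup G) : Set G)) ∧ (∀ n, N (n + 1) < N n) := by
  choose f hf1 hf2 using fun (H : {H : Subgroup G // IsOpen ((H : Subgroup G) : Set G)}) =>
    my_step_exists H.1 H.2
  let F : {H : Subgroup G // IsOpen ((H : Subgroup G) : Set G)} →
      {H : Subgroup G // IsOpen ((H : Subgroup G) : Set G)} := fun H => ⟨f H, hf1 H⟩
  let T : {H : Subgroup G // IsOpen ((H : Subgroup G) : Set G)} :=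
    ⟨⊤, by rw [Subgroup.coe_top]; exact isOpen_univ⟩
  refine ⟨fun n => (F^[n] T).1, fun n => (F^[n] T).2, fun n => ?_⟩
  show (F^[n + 1] T).1 < (F^[n] T).1
  rw [Function.iterate_succ_apply']
  exact hf2 _

end Aux2

section Aux3

open Cardinal

variable {G : Type u} [CommGroup G] [TopologicalSpace G] [IsTopologicalGroup G]
  [CompactSpace G] [T2Space G] [TotallyDisconnectedSpace G]

lemma my_index_bound (N : ℕ → Subgroup G)
    (hop : ∀ n, IsOpen ((N n : Subgroup G) : Set G))
    (hlt : ∀ n, N (n + 1) < N n) : ∀ n, 2 ^ n ≤ (N n).index := by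
  have hne : ∀ n, (N n).index ≠ 0 := fun n => by
    haveI : Finite (G ⧸ N n) := Subgroup.quotient_finite_of_isOpen _ (hop n)
    exact Subgroup.index_ne_zero_of_finite
  intro n
  induction n with
  | zero => simpa using Nat.one_le_iff_ne_zero.mpr (hne 0)
  | succ n ih =>
    have hrel := Subgroup.relIndex_mul_index (le_of_lt (hlt n))
    have hr0 : (N (n + 1)).relIndex (N n) ≠ 0 := fun hc =>
      hne (n + 1) (by rw [← hrel, hc, zero_mul])
    have hr1 : (N (n + 1)).relIndex (N n) ≠ 1 := fun hc =>
      (not_le_of_gt (hlt n)) (Subgroup.relIndex_eq_one.mp hc)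
    have hr2 : 2 ≤ (N (n + 1)).relIndex (N n) := by omega
    calc 2 ^ (n + 1) = 2 * 2 ^ n := by ring
    _ ≤ (N (n + 1)).relIndex (N n) * (N n).index := Nat.mul_le_mul hr2 ih
    _ = (N (n + 1)).index := hrel

end Aux3

theorem aux_statement2 (G : Type u) [CommGroup G] [TopologicalSpace G] [IsTopologicalGroup G]
    [CompactSpace G] [T2Space G] [TotallyDisconnectedSpace G] [Infinite G]
    (h : Monoid.IsTorsion G) :
    2 ^ Cardinal.aleph0 ≤ Cardinal.mk {H : Subgroup G | IsClosed (H : Set G)} := by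
  classical
  open Cardinal in
  obtain ⟨N, hop, hlt⟩ := my_exists_chain (G := G)
  have hanti : ∀ {m n : ℕ}, m ≤ n → N n ≤ N m := fun {m n} hmn =>
    (strictAnti_nat_of_succ_lt hlt).antitone hmn
  set K : Subgroup G := ⨅ n, N n with hK
  have hclN : ∀ n, IsClosed ((N n : Subgroup G) : Set G) := fun n =>
    (⟨N n, hop n⟩ : OpenSubgroup G).isClosed
  have hKset : ((K : Subgroup G) : Set G) = ⋂ n, ((N n : Subgroup G) : Set G) := by
    rw [hK]; exact Subgroup.coe_iInf
  haveI hKclosed : IsClosed ((K : Subgroup G) : Set G) := by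
    rw [hKset]; exact isClosed_iInter fun n => hclN n
  -- the quotient is infinite
  have hidx := my_index_bound N hop hlt
  haveI hQinf : Infinite (G ⧸ K) := by
    rw [← not_finite_iff_infinite]
    intro hfin
    have hK0 : K.index ≠ 0 := Subgroup.index_ne_zero_of_finite
    have hle : (N K.index).index ≤ K.index := Nat.le_of_dvd (Nat.pos_of_ne_zero hK0)
      (Subgroup.index_dvd_of_le (iInf_le _ _))
    have h2 : K.index < 2 ^ K.index := Nat.lt_two_pow_self
    have := (hidx K.index).trans hle
    omega
  -- open sets containing K contain some N n
  have hsubV : ∀ V : Set G, IsOpen V → ((K : Subgroup G) : Set G) ⊆ V →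
      ∃ n, ((N n : Subgroup G) : Set G) ⊆ V := by
    intro V hV hKV
    have hempty : Vᶜ ∩ ⋂ n, ((N n : Subgroup G) : Set G) = ∅ := by
      rw [← hKset]
      ext g
      simp only [Set.mem_inter_iff, Set.mem_compl_iff, Set.mem_empty_iff_false, iff_false,
        not_and]
      exact fun hg1 hg2 => hg1 (hKV hg2)
    obtain ⟨u, hu⟩ := (hV.isClosed_compl.isCompact).elim_finite_subfamily_closed
      (fun n => ((N n : Subgroup G) : Set G)) hclN hempty
    refine ⟨u.sup id, fun g hg => ?_⟩
    by_contra hgV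
    have hmem : g ∈ (Vᶜ ∩ ⋂ i ∈ u, ((N i : Subgroup G) : Set G)) :=
      ⟨hgV, Set.mem_iInter₂.mpr fun i hi => hanti (Finset.le_sup (f := id) hi) hg⟩
    rw [hu] at hmem
    exact hmem
  -- countable neighbourhood basis at 1 in the quotient
  have hbasis : (nhds (1 : G ⧸ K)).HasBasis (fun _ : ℕ => True)
      (fun n => (QuotientGroup.mk '' ((N n : Subgroup G) : Set G) : Set (G ⧸ K))) := by
    refine Filter.hasBasis_iff.mpr fun t => ⟨fun ht => ?_, fun ht => ?_⟩
    · obtain ⟨U, hUt, hUopen, h1U⟩ := mem_nhds_iff.mp ht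
      have hKV : ((K : Subgroup G) : Set G) ⊆ QuotientGroup.mk ⁻¹' U := by
        intro g hg
        have hg1 : (QuotientGroup.mk g : G ⧸ K) = 1 := (QuotientGroup.eq_one_iff g).mpr hg
        show (QuotientGroup.mk g : G ⧸ K) ∈ U
        rw [hg1]; exact h1U
      obtain ⟨n, hn⟩ := hsubV _ (hUopen.preimage continuous_quot_mk) hKV
      refine ⟨n, trivial, ?_⟩
      rintro q ⟨g, hg, rfl⟩
      exact hUt (hn hg)
    · obtain ⟨n, -, hsub⟩ := ht
      refine Filter.mem_of_superset ?_ hsub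
      have hopen : IsOpen (QuotientGroup.mk '' ((N n : Subgroup G) : Set G) : Set (G ⧸ K)) :=
        QuotientGroup.isOpenMap_coe _ (hop n)
      exact hopen.mem_nhds ⟨1, (N n).one_mem, rfl⟩
  haveI : (nhds (1 : G ⧸ K)).IsCountablyGenerated := hbasis.isCountablyGenerated
  haveI : T3Space (G ⧸ K) := QuotientGroup.instT3Space K
  haveI : TopologicalSpace.MetrizableSpace (G ⧸ K) := by
    letI : UniformSpace (G ⧸ K) := IsTopologicalGroup.rightUniformSpace (G ⧸ K)
    haveI : (uniformity (G ⧸ K)).IsCountablyGenerated := by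
      rw [uniformity_eq_comap_nhds_one']
      exact Filter.comap.isCountablyGenerated _ _
    exact UniformSpace.metrizableSpace
  letI : MetricSpace (G ⧸ K) := TopologicalSpace.metrizableSpaceMetric (G ⧸ K)
  haveI : CompleteSpace (G ⧸ K) := complete_of_compact
  have hperf : Perfect (Set.univ : Set (G ⧸ K)) := by
    refine ⟨isClosed_univ, preperfect_iff_nhds.mpr fun x _ U hU => ?_⟩
    by_contra hcon
    push_neg at hcon
    have hxU : U ⊆ {x} := fun y hy => hcon y ⟨hy, trivial⟩
    have hsing : {x} ∈ nhds x := Filter.mem_of_superset hU hxU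
    have hall : ∀ z : G ⧸ K, {z} ∈ nhds z := by
      intro z
      have hφ : (Homeomorph.mulLeft (z * x⁻¹)) x = z := inv_mul_cancel_right z x
      have hmap := (Homeomorph.mulLeft (z * x⁻¹)).map_nhds_eq x
      rw [hφ] at hmap
      rw [← hmap, Filter.mem_map]
      refine Filter.mem_of_superset hsing ?_
      intro y hy
      simp only [Set.mem_singleton_iff] at hy
      simp [hy, Set.mem_preimage, Homeomorph.coe_mulLeft, inv_mul_cancel_right]
    haveI : DiscreteTopology (G ⧸ K) := discreteTopology_iff_nhds.mpr fun z =>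
      le_antisymm (Filter.le_pure_iff.mpr (hall z)) (pure_le_nhds z)
    haveI : Finite (G ⧸ K) := finite_of_compact_of_discrete
    exact not_finite (G ⧸ K)
  obtain ⟨f, -, -, finj⟩ := hperf.exists_nat_bool_injection Set.univ_nonempty
  have h1 : (2 : Cardinal.{u}) ^ Cardinal.aleph0 ≤ Cardinal.mk (G ⧸ K) := by
    have hle := Cardinal.lift_mk_le_lift_mk_of_injective finj
    rw [Cardinal.lift_uzero] at hle
    have hmk : Cardinal.mk (ℕ → Bool) = (2 : Cardinal.{0}) ^ Cardinal.aleph0 := by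
      rw [← Cardinal.mk_bool, ← Cardinal.mk_nat, Cardinal.power_def]
    rw [hmk, Cardinal.lift_power, Cardinal.lift_aleph0, Cardinal.lift_ofNat] at hle
    exact hle
  have hQtor : ∀ q : G ⧸ K, IsOfFinOrder q := by
    intro q
    obtain ⟨g, rfl⟩ := QuotientGroup.mk'_surjective K q
    exact (QuotientGroup.mk' K).isOfFinOrder (h g)
  set S : Set (Subgroup (G ⧸ K)) :=
    {H | IsClosed (H : Set (G ⧸ K)) ∧ (H : Set (G ⧸ K)).Finite} with hS
  have hSmem : ∀ q : G ⧸ K, Subgroup.zpowers q ∈ S := by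
    intro q
    have hfin : ((Subgroup.zpowers q : Subgroup (G ⧸ K)) : Set (G ⧸ K)).Finite := by
      rw [← (hQtor q).powers_eq_zpowers]
      exact (hQtor q).finite_powers
    exact ⟨hfin.isClosed, hfin⟩
  have hcard : Cardinal.mk (G ⧸ K) ≤ Cardinal.mk S * Cardinal.aleph0 := by
    let ψ : G ⧸ K → Σ H : S, ((H.1 : Subgroup (G ⧸ K)) : Set (G ⧸ K)) := fun q =>
      ⟨⟨Subgroup.zpowers q, hSmem q⟩, ⟨q, Subgroup.mem_zpowers q⟩⟩
    have hinj : Function.Injective ψ :=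
      Function.LeftInverse.injective
        (g := fun s : Σ H : S, ((H.1 : Subgroup (G ⧸ K)) : Set (G ⧸ K)) => (s.2 : G ⧸ K))
        fun q => rfl
    calc Cardinal.mk (G ⧸ K)
        ≤ Cardinal.mk (Σ H : S, ((H.1 : Subgroup (G ⧸ K)) : Set (G ⧸ K))) :=
          Cardinal.mk_le_of_injective hinj
      _ = Cardinal.sum (fun H : S => Cardinal.mk ((H.1 : Subgroup (G ⧸ K)) : Set (G ⧸ K))) :=
          Cardinal.mk_sigma _
      _ ≤ Cardinal.sum (fun _ : S => Cardinal.aleph0) := Cardinal.sum_le_sum _ _ (fun H => by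
          haveI := H.2.2.to_subtype
          exact (Cardinal.lt_aleph0_of_finite _).le)
      _ = Cardinal.mk S * Cardinal.aleph0 := Cardinal.sum_const' _ _
  have hScard : (2 : Cardinal.{u}) ^ Cardinal.aleph0 ≤ Cardinal.mk S := by
    rcases le_or_gt Cardinal.aleph0 (Cardinal.mk S) with hc | hc
    · have hmax := h1.trans hcard
      rwa [Cardinal.mul_eq_max hc le_rfl, max_eq_left hc] at hmax
    · exfalso
      have hmul : Cardinal.mk S * Cardinal.aleph0 ≤ Cardinal.aleph0 * Cardinal.aleph0 :=
        mul_le_mul' hc.le le_rfl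
      rw [Cardinal.aleph0_mul_aleph0] at hmul
      exact absurd ((h1.trans hcard).trans hmul) (not_le_of_gt (Cardinal.cantor Cardinal.aleph0))
  have hcl : ∀ H : S, IsClosed ((Subgroup.comap (QuotientGroup.mk' K) H.1 : Subgroup G) : Set G) := by
    intro H
    rw [Subgroup.coe_comap]
    exact H.2.1.preimage continuous_quot_mk
  have hfinal : Cardinal.mk S ≤ Cardinal.mk {H : Subgroup G | IsClosed (H : Set G)} := by
    refine Cardinal.mk_le_of_injective (f := fun H : S =>
      (⟨Subgroup.comap (QuotientGroup.mk' K) H.1, hcl H⟩ :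
        {H : Subgroup G | IsClosed (H : Set G)})) ?_
    intro a b hab
    apply Subtype.ext
    exact Subgroup.comap_injective (QuotientGroup.mk'_surjective K) (congrArg Subtype.val hab)
  exact hScard.trans hfinal



/-- An infinite abelian torsion profinite group has at least `2 ^ ℵ₀` closed subgroups. -/
theorem statement2 (G : Type u) [CommGroup G] [TopologicalSpace G] [IsTopologicalGroup G]
    [CompactSpace G] [T2Space G] [TotallyDisconnectedSpace G] [Infinite G]
    (h : Monoid.IsTorsion G) :
    2 ^ Cardinal.aleph0 ≤ Cardinal.mk {H : Subgroup G | IsClosed (H : Set G)} := by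
  exact aux_statement2 G h
end

section
/- Let G be a profinite group, let N be a closed normal subgroup of G, and let K be a closed normal subgroup of G with K ≤ N. Suppose that for some prime p, K is topologically isomorphic to Z_p and the quotient group G/N is topologically isomorphic to Z_p. Then the set of closed subgroups of G has cardinality at least 2^{ℵ₀}. -/
open scoped Pointwise

universe u

/-- Key divisibility lemma: in the closed subgroup topologically generated by `y`,
any element of the kernel of `χ` is a `p^m`-th power for every `m`. -/
lemma padic_claimA {p : ℕ} [Fact p.Prime] {G : Type*} [Group G] [TopologicalSpace G]
    [IsTopologicalGroup G] [CompactSpace G] [T2Space G]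
    (χ : G →* Multiplicative ℤ_[p]) (y : G)
    (hχy : χ y = Multiplicative.ofAdd (1 : ℤ_[p])) (m : ℕ) :
    ∀ x ∈ (Subgroup.closure {y}).topologicalClosure, χ x = 1 →
      ∃ u ∈ (Subgroup.closure {y}).topologicalClosure, χ u = 1 ∧ u ^ p ^ m = x := by
  set H : Subgroup G := (Subgroup.closure {y}).topologicalClosure with hH
  have hp : p.Prime := Fact.out
  have hy : y ∈ H := Subgroup.le_topologicalClosure _ (Subgroup.subset_closure rfl)
  have hHcompact : IsCompact (H : Set G) :=
    (Subgroup.isClosed_topologicalClosure _).isCompact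
  -- the set of p-th powers of elements of H
  set P : Set G := (fun h => h ^ p) '' (H : Set G) with hP
  have hPcompact : IsCompact P := hHcompact.image (continuous_pow p)
  -- the union S
  set S : Set G := ⋃ i ∈ Finset.range p, (fun v => v * y ^ i) '' P with hS
  have hSclosed : IsClosed S := by
    refine Set.Finite.isClosed_biUnion (Finset.range p).finite_toSet (fun i _ => ?_)
    exact (hPcompact.image (continuous_mul_right _)).isClosed
  have hHS : (H : Set G) ⊆ S := by
    have h0 : ((Subgroup.closure {y} : Subgroup G) : Set G) ⊆ S := by
      intro x hx
      obtain ⟨n, rfl⟩ := Subgroup.mem_closure_singleton.mp hx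
      have hpne : (0 : ℤ) < (p : ℤ) := by exact_mod_cast hp.pos
      set q : ℤ := n / p
      set r : ℤ := n % p
      have hr0 : 0 ≤ r := Int.emod_nonneg n (by exact_mod_cast hp.ne_zero)
      have hrp : r < p := Int.emod_lt_of_pos n hpne
      have hdecomp : y ^ n = (y ^ q) ^ p * y ^ r.toNat := by
        rw [← zpow_natCast (y ^ q), ← zpow_mul, ← zpow_natCast y r.toNat,
          Int.toNat_of_nonneg hr0, ← zpow_add]
        congr 1
        rw [mul_comm]
        exact (Int.mul_ediv_add_emod n p).symm
      rw [hdecomp]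
      have hmem : r.toNat ∈ (↑(Finset.range p) : Set ℕ) := by
        simp only [Finset.coe_range, Set.mem_Iio]; omega
      exact Set.mem_biUnion hmem ⟨(y ^ q) ^ p, ⟨y ^ q, H.zpow_mem hy q, rfl⟩, rfl⟩
    calc (H : Set G) = closure ((Subgroup.closure {y} : Subgroup G) : Set G) :=
          Subgroup.topologicalClosure_coe
    _ ⊆ S := closure_minimal h0 hSclosed
  -- claim B: one p-th root step
  have claimB : ∀ x ∈ H, χ x = 1 → ∃ h ∈ H, χ h = 1 ∧ h ^ p = x := by
    intro x hx hχx
    obtain ⟨i, hi, v, ⟨h, hhH, rfl⟩, rfl⟩ := by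
      have := hHS hx
      simpa only [hS, Set.mem_iUnion, Finset.mem_coe, Finset.mem_range, exists_prop] using this
    have e1 : χ h ^ p * (Multiplicative.ofAdd (1 : ℤ_[p])) ^ i = 1 := by
      rw [← hχy, ← map_pow, ← map_pow, ← map_mul]; exact hχx
    have e2 : (p : ℤ_[p]) * (χ h).toAdd + (i : ℤ_[p]) = 0 := by
      have := congrArg Multiplicative.toAdd e1
      simpa [toAdd_pow, nsmul_eq_mul] using this
    have hi0 : i = 0 := by
      have e3 := congrArg (PadicInt.toZMod (p := p)) e2
      simp only [map_add, map_mul, map_natCast, map_zero, ZMod.natCast_self, zero_mul] at e3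
      have hdvd : p ∣ i := (ZMod.natCast_eq_zero_iff i p).mp (by simpa using e3)
      rcases Nat.eq_zero_or_pos i with h0 | h0
      · exact h0
      · exact absurd (Nat.le_of_dvd h0 hdvd) (by omega)
    subst hi0
    have e4 : (p : ℤ_[p]) * (χ h).toAdd = 0 := by simpa using e2
    have hc0 : (χ h).toAdd = 0 := by
      rcases mul_eq_zero.mp e4 with h' | h'
      · exact absurd h' (by exact_mod_cast hp.ne_zero)
      · exact h'
    refine ⟨h, hhH, ?_, by simpa using rfl⟩
    have := congrArg Multiplicative.ofAdd hc0
    simpa using this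
  -- induction
  induction m with
  | zero => intro x hx hχx; exact ⟨x, hx, hχx, by simpa using rfl⟩
  | succ m ih =>
      intro x hx hχx
      obtain ⟨h, hhH, hχh, hhp⟩ := claimB x hx hχx
      obtain ⟨u, huH, hχu, hup⟩ := ih h hhH hχh
      exact ⟨u, huH, hχu, by rw [pow_succ, pow_mul, hup, hhp]⟩


open Filter in
/-- In a profinite group, an element that is a `p^m`-th power for every `m` and whose
`p^n`-th powers tend to `1` must be trivial. -/
lemma padic_trivial {G : Type*} [Group G] [TopologicalSpace G] [IsTopologicalGroup G]
    [CompactSpace G] [T2Space G] [TotallyDisconnectedSpace G] {p : ℕ} (hp : p.Prime) {w : G}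
    (hpow : ∀ m : ℕ, ∃ u : G, u ^ p ^ m = w)
    (hten : Tendsto (fun n : ℕ => w ^ p ^ n) atTop (nhds 1)) : w = 1 := by
  by_contra hw
  obtain ⟨W, hWclopen, h1W, hwW⟩ :=
    exists_isClopen_of_totally_separated (α := G) (Ne.symm hw)
  obtain ⟨V, hVW⟩ :=
    IsTopologicalGroup.exist_openNormalSubgroup_sub_clopen_nhds_of_one hWclopen h1W
  haveI : Finite (G ⧸ V.toSubgroup) :=
    Subgroup.quotient_finite_of_isOpen _ V.toOpenSubgroup.isOpen
  set π := QuotientGroup.mk' V.toSubgroup with hπ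
  -- the order of π w is a power of p
  obtain ⟨n, hn⟩ : ∃ n : ℕ, w ^ p ^ n ∈ V.toSubgroup := by
    have := hten.eventually (V.toOpenSubgroup.isOpen.mem_nhds V.toSubgroup.one_mem)
    exact this.exists
  have hd1 : orderOf (π w) ∣ p ^ n := by
    apply orderOf_dvd_of_pow_eq_one
    rw [← map_pow]
    exact (QuotientGroup.eq_one_iff _).mpr hn
  -- the order of π w is coprime to p
  set m₀ := Nat.card (G ⧸ V.toSubgroup) with hm₀
  have hm₀pos : 0 < m₀ := Nat.card_pos
  obtain ⟨u, hu⟩ := hpow m₀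
  set t := orderOf (π u) with ht
  have ht0 : t ≠ 0 := (orderOf_pos _).ne'
  set v := t.factorization p with hv
  have hvm : v ≤ m₀ := by
    have h1 : p ^ v ∣ t := Nat.ordProj_dvd t p
    have h2 : t ∣ m₀ := orderOf_dvd_natCard _
    have h3 : p ^ v ≤ m₀ := Nat.le_of_dvd hm₀pos (h1.trans h2)
    exact le_trans (Nat.lt_pow_self (n := v) hp.one_lt).le h3
  have hd2 : orderOf (π w) ∣ ordCompl[p] t := by
    apply orderOf_dvd_of_pow_eq_one
    have hπw : π w = π u ^ p ^ m₀ := by rw [← map_pow, hu]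
    have hexp : p ^ m₀ * ordCompl[p] t = t * p ^ (m₀ - v) := by
      conv_lhs => rw [show m₀ = v + (m₀ - v) from (Nat.add_sub_cancel' hvm).symm]
      rw [pow_add]
      rw [show p ^ v * p ^ (m₀ - v) * ordCompl[p] t
          = p ^ v * ordCompl[p] t * p ^ (m₀ - v) by ring,
        Nat.ordProj_mul_ordCompl_eq_self t p]
    rw [hπw, ← pow_mul, hexp, pow_mul, pow_orderOf_eq_one, one_pow]
  have hcop : Nat.Coprime (p ^ n) (ordCompl[p] t) :=
    (Nat.coprime_ordCompl hp ht0).pow_left n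
  have hd : orderOf (π w) = 1 :=
    Nat.dvd_one.mp (hcop ▸ Nat.dvd_gcd hd1 hd2)
  have : w ∈ V.toSubgroup := (QuotientGroup.eq_one_iff w).mp (orderOf_eq_one_iff.mp hd)
  exact hwW (hVW this)

open Set Filter in
/-- The Cantor space embeds into `ℤ_p`. -/
lemma padic_cantor (p : ℕ) [Fact p.Prime] :
    ∃ f : (ℕ → Bool) → ℤ_[p], Function.Injective f := by
  have hp : p.Prime := Fact.out
  suffices ∃ f : (ℕ → Bool) → ℤ_[p], range f ⊆ univ ∧ Continuous f ∧ Function.Injective f by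
    obtain ⟨f, -, -, hf⟩ := this; exact ⟨f, hf⟩
  apply Perfect.exists_nat_bool_injection _ univ_nonempty
  refine ⟨isClosed_univ, preperfect_iff_nhds.2 (fun x _ U hU => ?_)⟩
  have hnorm : ‖(p : ℤ_[p])‖ < 1 := by
    rw [PadicInt.norm_p]
    apply inv_lt_one_of_one_lt₀
    exact_mod_cast hp.one_lt
  have A : Tendsto (fun n : ℕ => x + (p : ℤ_[p]) ^ n) atTop (nhds (x + 0)) :=
    tendsto_const_nhds.add (tendsto_pow_atTop_nhds_zero_of_norm_lt_one hnorm)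
  rw [add_zero] at A
  have B : ∀ᶠ n in atTop, x + (p : ℤ_[p]) ^ n ∈ U := tendsto_def.1 A U hU
  rcases B.exists with ⟨n, hn⟩
  refine ⟨x + (p : ℤ_[p]) ^ n, by simpa using hn, ?_⟩
  simp only [ne_eq, add_eq_left]
  apply pow_ne_zero
  exact_mod_cast hp.ne_zero

/-- Let `G` be a profinite group, `N` a closed normal subgroup of `G` and `K ≤ N` a closed
normal subgroup of `G`.  If, for some prime `p`, both `K` and `G/N` are topologically
isomorphic to `ℤ_p`, then `G` has at least `2 ^ ℵ₀` closed subgroups. -/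
theorem statement3 (G : Type u) [Group G] [TopologicalSpace G] [IsTopologicalGroup G]
    [CompactSpace G] [T2Space G] [TotallyDisconnectedSpace G]
    (N K : Subgroup G) [N.Normal] [K.Normal]
    (hNc : IsClosed (N : Set G)) (hKc : IsClosed (K : Set G)) (hKN : K ≤ N)
    (p : ℕ) (hp : p.Prime)
    (hK : TopIso K (Multiplicative (@PadicInt p ⟨hp⟩)))
    (hGN : TopIso (G ⧸ N) (Multiplicative (@PadicInt p ⟨hp⟩))) :
    2 ^ Cardinal.aleph0 ≤ Cardinal.mk {H : Subgroup G | IsClosed (H : Set G)} := by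
  haveI : Fact p.Prime := ⟨hp⟩
  obtain ⟨eK, heK, heK'⟩ := hK
  obtain ⟨eQ, heQ, heQ'⟩ := hGN
  -- the continuous character χ : G → ℤ_p with kernel N
  set χ : G →* Multiplicative ℤ_[p] := eQ.toMonoidHom.comp (QuotientGroup.mk' N) with hχdef
  have hχN : ∀ x ∈ N, χ x = 1 := by
    intro x hx
    have : (QuotientGroup.mk' N) x = 1 := (QuotientGroup.eq_one_iff x).mpr hx
    simp [hχdef, MonoidHom.comp_apply, this]
  -- the continuous injection κ : ℤ_p → G with image K
  set κ : Multiplicative ℤ_[p] →* G := K.subtype.comp eK.symm.toMonoidHom with hκdef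
  have hκcont : Continuous κ := continuous_subtype_val.comp heK'
  have hκinj : Function.Injective κ :=
    Subtype.val_injective.comp eK.symm.injective
  have hκK : ∀ t, κ t ∈ K := fun t => SetLike.coe_mem _
  -- choose g mapping to the generator
  obtain ⟨g, hg⟩ := QuotientGroup.mk'_surjective N (eQ.symm (Multiplicative.ofAdd 1))
  have hχg : χ g = Multiplicative.ofAdd (1 : ℤ_[p]) := by
    simp [hχdef, MonoidHom.comp_apply, hg]
  -- the family of closed subgroups
  set y : ℤ_[p] → G := fun a => g * κ (Multiplicative.ofAdd a) with hydef
  have hχy : ∀ a, χ (y a) = Multiplicative.ofAdd (1 : ℤ_[p]) := by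
    intro a
    rw [hydef]
    simp only [map_mul, hχg, hχN _ (hKN (hκK _)), mul_one]
  set HS : ℤ_[p] → Subgroup G := fun a => (Subgroup.closure {y a}).topologicalClosure with hHS
  have hyH : ∀ a, y a ∈ HS a := fun a =>
    Subgroup.le_topologicalClosure _ (Subgroup.subset_closure rfl)
  -- injectivity
  have hinj : Function.Injective HS := by
    intro a b hab
    by_contra hne
    -- w lies in K, in HS a, and in the kernel of χ
    set w : G := y a * (y b)⁻¹ with hwdef
    have hκab : κ (Multiplicative.ofAdd a) * (κ (Multiplicative.ofAdd b))⁻¹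
        = κ (Multiplicative.ofAdd (a - b)) := by
      rw [← map_inv, ← map_mul]
      congr 1
      rw [← ofAdd_neg, ← ofAdd_add, sub_eq_add_neg]
    have hw : w = g * κ (Multiplicative.ofAdd (a - b)) * g⁻¹ := by
      rw [hwdef, hydef, ← hκab]
      group
    have hw1 : w ≠ 1 := by
      intro h1
      have h2 : κ (Multiplicative.ofAdd (a - b)) = 1 := by
        have h3 : g⁻¹ * (g * κ (Multiplicative.ofAdd (a - b)) * g⁻¹) * g = g⁻¹ * 1 * g := by
          rw [← hw, h1]
        simpa [mul_assoc] using h3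
      have h4 : Multiplicative.ofAdd (a - b) = 1 := hκinj (by simpa using h2)
      have h5 : a - b = 0 := by simpa using congrArg Multiplicative.toAdd h4
      exact hne (sub_eq_zero.mp h5)
    have hwH : w ∈ HS a := by
      refine Subgroup.mul_mem _ (hyH a) (Subgroup.inv_mem _ ?_)
      rw [hab]; exact hyH b
    have hχw : χ w = 1 := by
      rw [hwdef, map_mul, map_inv, hχy, hχy, mul_inv_cancel]
    -- w is a p^m-th power for every m
    have hpow : ∀ m : ℕ, ∃ u : G, u ^ p ^ m = w := by
      intro m
      obtain ⟨u, -, -, hu⟩ := padic_claimA χ (y a) (hχy a) m w hwH hχw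
      exact ⟨u, hu⟩
    -- the p^n-th powers of w tend to 1
    have hten : Filter.Tendsto (fun n : ℕ => w ^ p ^ n) Filter.atTop (nhds 1) := by
      have hfun : ∀ n : ℕ, w ^ p ^ n
          = g * κ (Multiplicative.ofAdd ((p : ℤ_[p]) ^ n * (a - b))) * g⁻¹ := by
        intro n
        rw [hw]
        rw [show ((p : ℤ_[p]) ^ n * (a - b)) = (p ^ n : ℕ) • (a - b) by
          rw [nsmul_eq_mul]; push_cast; ring]
        rw [ofAdd_nsmul, map_pow, conj_pow]
      have hbase : Filter.Tendsto (fun n : ℕ => (p : ℤ_[p]) ^ n * (a - b))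
          Filter.atTop (nhds 0) := by
        have hnorm : ‖(p : ℤ_[p])‖ < 1 := by
          rw [PadicInt.norm_p]
          apply inv_lt_one_of_one_lt₀
          exact_mod_cast hp.one_lt
        simpa using (tendsto_pow_atTop_nhds_zero_of_norm_lt_one hnorm).mul_const (a - b)
      have hcont : Continuous fun c : ℤ_[p] => g * κ (Multiplicative.ofAdd c) * g⁻¹ := by
        exact (continuous_const.mul (hκcont.comp continuous_ofAdd)).mul continuous_const
      have := (hcont.tendsto 0).comp hbase
      simp only [Function.comp_def] at this
      rw [show (fun n : ℕ => w ^ p ^ n)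
          = fun n : ℕ => g * κ (Multiplicative.ofAdd ((p : ℤ_[p]) ^ n * (a - b))) * g⁻¹ from
          funext hfun]
      simpa using this
    exact hw1 (padic_trivial hp hpow hten)
  -- conclude with cardinal arithmetic
  obtain ⟨f, hf⟩ := padic_cantor p
  set F : (ℕ → Bool) → {H : Subgroup G | IsClosed (H : Set G)} := fun b =>
    ⟨HS (f b), Subgroup.isClosed_topologicalClosure _⟩ with hF
  have hFinj : Function.Injective F := by
    intro b1 b2 h
    apply hf; apply hinj
    simpa [hF, Subtype.ext_iff] using h
  have hcard := Cardinal.lift_mk_le_lift_mk_of_injective hFinj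
  rw [Cardinal.lift_id'] at hcard
  have h1 : Cardinal.mk (ℕ → Bool) = 2 ^ Cardinal.aleph0 := by
    rw [← Cardinal.power_def, Cardinal.mk_bool, Cardinal.mk_nat]
  rw [h1, Cardinal.lift_power, Cardinal.lift_aleph0, Cardinal.lift_two] at hcard
  exact hcard
end

section
/- Let G be a topologically finitely generated profinite group whose commutator subgroup G′ is finite. Then the center Z(G) of G is an open (normal) subgroup of G. -/
open scoped Pointwise

open scoped commutatorElement

universe u

/-- If `G` is a topologically finitely generated profinite group whose commutator subgroup
is finite, then the center of `G` is open in `G`. -/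
theorem statement6 (G : Type u) [Group G] [TopologicalSpace G] [IsTopologicalGroup G]
    [CompactSpace G] [T2Space G] [TotallyDisconnectedSpace G]
    (hfg : IsTopologicallyFG G) (hcomm : (commutator G : Set G).Finite) :
    IsOpen ((Subgroup.center G : Subgroup G) : Set G) := by

  obtain ⟨S, hSfin, hSdense⟩ := hfg
  -- Each singleton centralizer is open.
  have hcent : ∀ g : G, IsOpen ((Subgroup.centralizer {g} : Subgroup G) : Set G) := by
    intro g
    set f : G → G := fun x => x * g * x⁻¹ with hf
    have hfc : Continuous f := by fun_prop
    set T : Set G := (commutator G : Set G) * {g} with hT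
    have hTfin : T.Finite := hcomm.mul (Set.finite_singleton g)
    have hmaps : ∀ x : G, f x ∈ T := by
      intro x
      refine ⟨⁅x, g⁆, ?_, g, rfl, ?_⟩
      · exact Subgroup.commutator_mem_commutator (Subgroup.mem_top x) (Subgroup.mem_top g)
      · simp [commutatorElement_def, hf, mul_assoc]
    have key : ((Subgroup.centralizer {g} : Subgroup G) : Set G) = (f ⁻¹' (T \ {g}))ᶜ := by
      ext x
      simp only [SetLike.mem_coe, Subgroup.mem_centralizer_singleton_iff,
        Set.mem_compl_iff, Set.mem_preimage, Set.mem_diff, Set.mem_singleton_iff,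
        not_and, not_not]
      constructor
      · intro h _
        show x * g * x⁻¹ = g
        rw [h, mul_inv_cancel_right]
      · intro h
        have hx : x * g * x⁻¹ = g := h (hmaps x)
        exact mul_inv_eq_iff_eq_mul.mp hx
    rw [key]
    exact ((hTfin.diff (t := {g})).isClosed.preimage hfc).isOpen_compl
  -- The center equals the centralizer of S.
  have heq : ((Subgroup.center G : Subgroup G) : Set G) = (Subgroup.centralizer S : Set G) := by
    apply subset_antisymm
    · intro x hx
      rw [SetLike.mem_coe, Subgroup.mem_centralizer_iff]
      intro g _
      exact (Subgroup.mem_center_iff.mp hx g)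
    · intro x hx
      rw [SetLike.mem_coe, Subgroup.mem_center_iff]
      rw [SetLike.mem_coe, Subgroup.mem_centralizer_iff] at hx
      intro g
      have hclosed : IsClosed ({y : G | x * y = y * x}) :=
        isClosed_eq (continuous_const.mul continuous_id) (continuous_id.mul continuous_const)
      have hsub : Subgroup.closure S ≤ Subgroup.centralizer {x} := by
        rw [Subgroup.closure_le]
        intro s hs
        rw [SetLike.mem_coe, Subgroup.mem_centralizer_singleton_iff]
        exact hx s hs
      have hclosed2 : IsClosed ((Subgroup.centralizer {x} : Subgroup G) : Set G) := by
        have : ((Subgroup.centralizer {x} : Subgroup G) : Set G) = {y : G | x * y = y * x} := by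
          ext y
          simp [Subgroup.mem_centralizer_singleton_iff, eq_comm]
        rw [this]; exact hclosed
      have htop : (⊤ : Subgroup G) ≤ Subgroup.centralizer {x} := by
        rw [← hSdense]
        exact Subgroup.topologicalClosure_minimal _ hsub hclosed2
      have hg := htop (Subgroup.mem_top g)
      rw [Subgroup.mem_centralizer_singleton_iff] at hg
      exact hg
  rw [heq]
  have : (Subgroup.centralizer S : Set G) = ⋂ s ∈ S, ((Subgroup.centralizer {s} : Subgroup G) : Set G) := by
    ext x
    simp only [SetLike.mem_coe, Subgroup.mem_centralizer_iff, Set.mem_iInter,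
      Subgroup.mem_centralizer_singleton_iff]
    aesop
  rw [this]
  exact hSfin.isOpen_biInter (fun s _ => hcent s)
end

section
/- Let G be a profinite group having a central open subgroup N such that N = N_1 × ⋯ × N_k (an internal direct product), where p_1, …, p_k are pairwise distinct primes (k ≥ 1) and, for each i, N_i is a procyclic pro-p_i group. Then for every closed subgroup H of G, the set {K : K is a closed subgroup of G and K ∩ N = H ∩ N} is finite. -/
open scoped Pointwise

universe u

section AuxiliaryLemmas
open Subgroup

/-- In a cyclic subgroup of a finite group, at most `m` elements satisfy `x ^ m = 1`. -/
lemma cyclic_torsion_bound {A : Type*} [Group A] [Finite A] {m : ℕ} (hm : 0 < m) (z : A) :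
    Nat.card {x : A // x ∈ zpowers z ∧ x ^ m = 1} ≤ m := by
  classical
  letI : Fintype A := Fintype.ofFinite A
  haveI : IsCyclic ↥(zpowers z) := by
    refine ⟨⟨⟨z, mem_zpowers z⟩, fun x => ?_⟩⟩
    obtain ⟨n, hn⟩ := x.2
    exact ⟨n, Subtype.ext (by simpa using hn)⟩
  have key := IsCyclic.card_pow_eq_one_le (α := ↥(zpowers z)) hm
  have hinj : Function.Injective
      (fun x : {x : A // x ∈ zpowers z ∧ x ^ m = 1} =>
        (⟨⟨x.1, x.2.1⟩, by ext; simpa using x.2.2⟩ :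
          {y : ↥(zpowers z) // y ^ m = 1})) := by
    intro a b h
    simpa [Subtype.ext_iff] using h
  have key2 : Nat.card {y : ↥(zpowers z) // y ^ m = 1} ≤ m := by
    classical
    rw [Nat.card_eq_fintype_card, Fintype.card_subtype]
    convert key using 2
  exact le_trans (Nat.card_le_card_of_injective _ hinj) key2

/-- In a finite group, the set of `m`-torsion elements of a subgroup generated by `k`
central elements has at most `m ^ k` elements. -/
lemma torsion_bound {m : ℕ} (hm : 0 < m) :
    ∀ (k : ℕ) (A : Type*) (_ : Group A) (_ : Finite A) (f : Fin k → A),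
    (∀ i, f i ∈ Subgroup.center A) →
    Nat.card {a : A // a ∈ Subgroup.closure (Set.range f) ∧ a ^ m = 1} ≤ m ^ k := by
  intro k
  induction k with
  | zero =>
    intro A _ _ f _
    have h1 : ∀ x : {a : A // a ∈ Subgroup.closure (Set.range f) ∧ a ^ m = 1}, x.1 = 1 := by
      rintro ⟨a, ha, -⟩
      have : Set.range f = ∅ := Set.range_eq_empty f
      rw [this, Subgroup.closure_empty, Subgroup.mem_bot] at ha
      exact ha
    have : Subsingleton {a : A // a ∈ Subgroup.closure (Set.range f) ∧ a ^ m = 1} :=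
      ⟨fun x y => Subtype.ext ((h1 x).trans (h1 y).symm)⟩
    simpa using Finite.card_le_one_iff_subsingleton.mpr this
  | succ k ih =>
    intro A _ _ f hf
    classical
    set g : Fin k → A := f ∘ Fin.succ with hg
    set C' : Subgroup A := Subgroup.closure (Set.range g) with hC
    have hC'le : C' ≤ Subgroup.center A := by
      rw [hC, Subgroup.closure_le]
      rintro x ⟨i, rfl⟩
      exact hf _
    haveI hC'norm : C'.Normal := by
      constructor
      intro n hn gg
      have h2 : gg * n * gg⁻¹ = n := by
        rw [(Subgroup.mem_center_iff.mp (hC'le hn)) gg]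
        simp [mul_assoc]
      rw [h2]; exact hn
    set Q := A ⧸ C' with hQ
    set ψ : A →* Q := QuotientGroup.mk' C' with hψ
    set z : Q := ψ (f 0) with hz
    -- section of cosets landing in the torsion set
    set T := {a : A // a ∈ Subgroup.closure (Set.range f) ∧ a ^ m = 1} with hT
    set T' := {a : A // a ∈ C' ∧ a ^ m = 1} with hT'
    set S := {x : Q // x ∈ zpowers z ∧ x ^ m = 1} with hS
    have hmemQ : ∀ a : A, a ∈ Subgroup.closure (Set.range f) → ψ a ∈ zpowers z := by
      intro a ha
      have hle : Subgroup.closure (Set.range f) ≤ zpowers (f 0) ⊔ C' := by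
        rw [Subgroup.closure_le]
        rintro x ⟨i, rfl⟩
        rcases Fin.eq_zero_or_eq_succ i with h0 | ⟨j, rfl⟩
        · exact Subgroup.mem_sup_left (by rw [h0]; exact mem_zpowers _)
        · exact Subgroup.mem_sup_right (Subgroup.subset_closure ⟨j, rfl⟩)
      have := hle ha
      have hmap : Subgroup.map ψ (zpowers (f 0) ⊔ C') ≤ zpowers z := by
        rw [Subgroup.map_sup, MonoidHom.map_zpowers]
        apply sup_le le_rfl
        rintro x ⟨y, hy, rfl⟩
        have : ψ y = 1 := (QuotientGroup.eq_one_iff y).mpr hy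
        rw [this]; exact Subgroup.one_mem _
      exact hmap ⟨a, this, rfl⟩
    let sfun : Q → A := fun q => if h : ∃ a : T, ψ a.1 = q then (Classical.choose h).1 else 1
    have hsfun : ∀ a : T, ψ (sfun (ψ a.1)) = ψ a.1 ∧
        sfun (ψ a.1) ∈ Subgroup.closure (Set.range f) ∧ (sfun (ψ a.1)) ^ m = 1 := by
      intro a
      have h : ∃ b : T, ψ b.1 = ψ a.1 := ⟨a, rfl⟩
      have hs : sfun (ψ a.1) = (Classical.choose h).1 := dif_pos h
      rw [hs]
      exact ⟨Classical.choose_spec h, (Classical.choose h).2.1, (Classical.choose h).2.2⟩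
    have hker : ∀ x : A, ψ x = 1 → x ∈ C' := fun x hx => (QuotientGroup.eq_one_iff x).mp hx
    set Φ : T → S × T' := fun a =>
      ⟨⟨ψ a.1, hmemQ a.1 a.2.1, by rw [← map_pow, a.2.2, map_one]⟩,
       ⟨(sfun (ψ a.1))⁻¹ * a.1, by
          apply hker
          rw [map_mul, map_inv, (hsfun a).1]
          simp, by
          have hcomm : Commute (sfun (ψ a.1)) ((sfun (ψ a.1))⁻¹ * a.1) := by
            have hc : (sfun (ψ a.1))⁻¹ * a.1 ∈ Subgroup.center A := by
              apply hC'le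
              apply hker
              rw [map_mul, map_inv, (hsfun a).1]
              simp
            exact (Subgroup.mem_center_iff.mp hc) _
          have hprod : (sfun (ψ a.1) * ((sfun (ψ a.1))⁻¹ * a.1)) ^ m
              = (sfun (ψ a.1)) ^ m * ((sfun (ψ a.1))⁻¹ * a.1) ^ m := hcomm.mul_pow m
          rw [mul_inv_cancel_left] at hprod
          rw [a.2.2, (hsfun a).2.2, one_mul] at hprod
          exact hprod.symm⟩⟩ with hΦ
    have hinj : Function.Injective Φ := by
      intro a b hab
      have h1 : ψ a.1 = ψ b.1 := congrArg (fun p => (p.1 : S).1) hab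
      have h2 : (sfun (ψ a.1))⁻¹ * a.1 = (sfun (ψ b.1))⁻¹ * b.1 :=
        congrArg (fun p => (p.2 : T').1) hab
      rw [h1] at h2
      exact Subtype.ext (mul_left_cancel h2)
    have hS : Nat.card S ≤ m := cyclic_torsion_bound hm z
    have hT' : Nat.card T' ≤ m ^ k := by
      have := ih A ‹Group A› ‹Finite A› g (fun i => hf (Fin.succ i))
      rw [hT', hC]
      exact this
    calc Nat.card T ≤ Nat.card (S × T') := Nat.card_le_card_of_injective Φ hinj
      _ = Nat.card S * Nat.card T' := Nat.card_prod _ _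
      _ ≤ m * m ^ k := Nat.mul_le_mul hS hT'
      _ = m ^ (k + 1) := (pow_succ' m k).symm

/-- In a profinite group, a closed subgroup can be separated from an outside point by an
open normal subgroup. -/
lemma sep_lemma {G : Type*} [Group G] [TopologicalSpace G] [IsTopologicalGroup G]
    [CompactSpace G] [T2Space G] [TotallyDisconnectedSpace G]
    {M : Subgroup G} (hM : IsClosed (M : Set G)) {x : G} (hx : x ∉ M) :
    ∃ U : Subgroup G, U.Normal ∧ IsOpen (U : Set G) ∧ x ∉ (M : Set G) * (U : Set G) := by
  have hO : IsOpen ((M : Set G)ᶜ) := hM.isOpen_compl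
  have hcont : Continuous (fun u : G => x * u⁻¹) := by continuity
  have hW : (fun u : G => x * u⁻¹) ⁻¹' ((M : Set G)ᶜ) ∈ nhds (1 : G) := by
    apply hcont.continuousAt.preimage_mem_nhds
    simpa using hO.mem_nhds (by simpa using hx)
  obtain ⟨V, ⟨h1V, hVclopen⟩, hVsub⟩ := (nhds_basis_clopen (1 : G)).mem_iff.mp hW
  obtain ⟨U, hU⟩ := IsTopologicalGroup.exist_openNormalSubgroup_sub_clopen_nhds_of_one hVclopen h1V
  refine ⟨U.toSubgroup, U.isNormal', U.isOpen, ?_⟩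
  rintro ⟨a, ha, u, hu, rfl⟩
  have : a * u * u⁻¹ ∈ (M : Set G)ᶜ := hVsub (hU hu)
  simp only [mul_inv_cancel_right] at this
  exact this ha

end AuxiliaryLemmas

/-- Let `G` be a profinite group with a central open subgroup `N` which is the internal
direct product of subgroups `N 1, …, N k`, where the `p i` are pairwise distinct primes and
each `N i` is a closed procyclic pro-`p i` subgroup.  Then for every closed subgroup `H` of
`G`, the set of closed subgroups `K` of `G` with `K ⊓ N = H ⊓ N` is finite. -/
theorem statement8 (G : Type u) [Group G] [TopologicalSpace G] [IsTopologicalGroup G]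
    [CompactSpace G] [T2Space G] [TotallyDisconnectedSpace G]
    (k : ℕ) (hk : 1 ≤ k) (p : Fin k → ℕ) (hp : ∀ i, (p i).Prime)
    (hinj : Function.Injective p)
    (N : Subgroup G) (Ni : Fin k → Subgroup G)
    (hprod : iSupIndep Ni ∧ (⨆ i, Ni i) = N)
    (hcentral : N ≤ Subgroup.center G) (hNopen : IsOpen (N : Set G))
    (hclosed : ∀ i, IsClosed ((Ni i : Subgroup G) : Set G))
    (hprocyclic : ∀ i, ∃ x : (Ni i), (Subgroup.zpowers x).topologicalClosure = ⊤)
    (hproP : ∀ i, IsProP (p i) (Ni i))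
    (H : Subgroup G) (hH : IsClosed (H : Set G)) :
    {K : Subgroup G | IsClosed (K : Set G) ∧ K ⊓ N = H ⊓ N}.Finite := by
  classical
  obtain ⟨hindep, hsup⟩ := hprod
  set M : Subgroup G := H ⊓ N with hMdef
  have hMcent : M ≤ Subgroup.center G := fun x hx => hcentral hx.2
  haveI hMnormal : M.Normal := by
    constructor
    intro n hn g
    have h2 : g * n * g⁻¹ = n := by
      rw [(Subgroup.mem_center_iff.mp (hMcent hn)) g]; simp [mul_assoc]
    rw [h2]; exact hn
  haveI hNnormal : N.Normal := by
    constructor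
    intro n hn g
    have h2 : g * n * g⁻¹ = n := by
      rw [(Subgroup.mem_center_iff.mp (hcentral hn)) g]; simp [mul_assoc]
    rw [h2]; exact hn
  haveI : Finite (G ⧸ N) := N.quotient_finite_of_isOpen hNopen
  haveI : N.FiniteIndex := N.finiteIndex_of_finite_quotient
  set m : ℕ := N.index with hmdef
  have hm0 : 0 < m := Nat.pos_of_ne_zero Subgroup.FiniteIndex.index_ne_zero
  have hpow : ∀ g : G, g ^ m ∈ N := fun g => N.pow_index_mem g
  have hMN : M ≤ N := inf_le_right
  have hNclosed : IsClosed (N : Set G) := N.isClosed_of_isOpen hNopen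
  have hMclosed : IsClosed (M : Set G) := by
    rw [hMdef, Subgroup.coe_inf]
    exact hH.inter hNclosed
  -- the set of elements whose m-th power lies in M
  set P : Set G := {g : G | g ^ m ∈ M} with hPdef
  have hPsat : ∀ g ∈ P, ∀ u ∈ M, g * u ∈ P := by
    intro g hg u hu
    have hcomm : Commute g u := (Subgroup.mem_center_iff.mp (hMcent hu)) g
    show (g * u) ^ m ∈ M
    rw [hcomm.mul_pow]
    exact mul_mem hg (pow_mem hu m)
  set Ttil : Set (G ⧸ M) := (QuotientGroup.mk : G → G ⧸ M) '' P with hTtil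
  -- generators
  set xi : ∀ i, ↥(Ni i) := fun i => (hprocyclic i).choose with hxidef
  have hxi : ∀ i, (Subgroup.zpowers (xi i)).topologicalClosure = ⊤ :=
    fun i => (hprocyclic i).choose_spec
  have hNiN : ∀ i, Ni i ≤ N := fun i => hsup ▸ le_iSup Ni i
  have hNile : ∀ i, Ni i ≤ (Subgroup.zpowers ((xi i : G))).topologicalClosure := by
    intro i g hg
    have hmem : (⟨g, hg⟩ : ↥(Ni i)) ∈ (Subgroup.zpowers (xi i)).topologicalClosure := by
      rw [hxi i]; trivial
    have h1 : (⟨g, hg⟩ : ↥(Ni i)) ∈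
        _root_.closure ((Subgroup.zpowers (xi i) : Subgroup ↥(Ni i)) : Set ↥(Ni i)) := hmem
    have h2 : g ∈ _root_.closure ((Subtype.val : ↥(Ni i) → G) ''
        ((Subgroup.zpowers (xi i) : Subgroup ↥(Ni i)) : Set ↥(Ni i))) :=
      image_closure_subset_closure_image continuous_subtype_val ⟨_, h1, rfl⟩
    have h3 : ((Subtype.val : ↥(Ni i) → G) ''
        ((Subgroup.zpowers (xi i) : Subgroup ↥(Ni i)) : Set ↥(Ni i))) ⊆
        ((Subgroup.zpowers ((xi i : G)) : Subgroup G) : Set G) := by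
      rintro y ⟨w, hw, rfl⟩
      obtain ⟨n, rfl⟩ := hw
      exact ⟨n, by push_cast; rfl⟩
    exact closure_mono h3 h2
  -- main finiteness of Ttil
  have Tfin : Ttil.Finite := by
    by_contra hinf
    obtain ⟨s, hssub, hscard⟩ :=
      Set.Infinite.exists_subset_card_eq hinf (m * m ^ k + 1)
    have houtP : ∀ t ∈ s, (t : G ⧸ M).out ∈ P := by
      intro t ht
      obtain ⟨g, hgP, hmk⟩ := hssub ht
      have : g⁻¹ * t.out ∈ M := by
        rw [← QuotientGroup.eq (s := M)]
        rw [hmk]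
        exact (QuotientGroup.out_eq' t).symm
      have := hPsat g hgP _ this
      simpa using this
    have hout_ne : ∀ t ∈ s, ∀ t' ∈ s, t ≠ t' → (t : G ⧸ M).out⁻¹ * t'.out ∉ M := by
      intro t ht t' ht' hne hmem
      apply hne
      have : (QuotientGroup.mk t.out : G ⧸ M) = QuotientGroup.mk t'.out :=
        QuotientGroup.eq.mpr hmem
      rwa [QuotientGroup.out_eq', QuotientGroup.out_eq'] at this
    -- separating open normal subgroup
    set ι := {q : (G ⧸ M) × (G ⧸ M) // q.1 ∈ s ∧ q.2 ∈ s ∧ q.1 ≠ q.2} with hι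
    haveI : Finite ι := by
      apply Set.Finite.to_subtype
      apply Set.Finite.subset (s.finite_toSet.prod s.finite_toSet)
      rintro ⟨a, b⟩ ⟨h1, h2, _⟩
      exact ⟨h1, h2⟩
    have Uch : ∀ i : ι, ∃ U : Subgroup G, U.Normal ∧ IsOpen (U : Set G) ∧
        (i.1.1.out)⁻¹ * i.1.2.out ∉ (M : Set G) * (U : Set G) :=
      fun i => sep_lemma hMclosed (hout_ne _ i.2.1 _ i.2.2.1 i.2.2.2)
    choose Ufun hUnorm hUopen hUsep using Uch
    set U : Subgroup G := ⨅ i, Ufun i with hUdef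
    have hUopen' : IsOpen (U : Set G) := by
      rw [hUdef, Subgroup.coe_iInf]
      exact isOpen_iInter_of_finite fun i => hUopen i
    haveI hUnormal : U.Normal := by
      constructor
      intro n hn g
      rw [hUdef, Subgroup.mem_iInf] at hn ⊢
      exact fun i => (hUnorm i).conj_mem n (hn i) g
    set V : Subgroup G := M ⊔ U with hVdef
    haveI hVnormal : V.Normal := Subgroup.sup_normal M U
    have hVopen : IsOpen (V : Set G) := Subgroup.isOpen_mono le_sup_right hUopen'
    have hMV : M ≤ V := le_sup_left
    haveI : Finite (G ⧸ V) := V.quotient_finite_of_isOpen hVopen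
    set ψ : G →* G ⧸ V := QuotientGroup.mk' V with hψdef
    have hVcoe : (V : Set G) = (M : Set G) * (U : Set G) := Subgroup.mul_normal M U
    have hsep : ∀ t ∈ s, ∀ t' ∈ s, t ≠ t' → ψ ((t : G ⧸ M).out) ≠ ψ (t'.out) := by
      intro t ht t' ht' hne heq
      have hmemV : (t.out)⁻¹ * t'.out ∈ V := by
        have hone : ψ ((t.out)⁻¹ * t'.out) = 1 := by
          rw [map_mul, map_inv, heq]
          simp
        exact (QuotientGroup.eq_one_iff _).mp hone
      have : (t.out)⁻¹ * t'.out ∈ (M : Set G) * ((Ufun ⟨(t, t'), ht, ht', hne⟩ : Subgroup G) : Set G) := by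
        have hmemV' : (t.out)⁻¹ * t'.out ∈ (M : Set G) * (U : Set G) := by
          rw [← hVcoe]; exact hmemV
        refine Set.mul_subset_mul_left ?_ hmemV'
        exact fun x hx => (iInf_le Ufun _ : U ≤ _) hx
      exact hUsep ⟨(t, t'), ht, ht', hne⟩ this
    have htor : ∀ t ∈ s, (ψ ((t : G ⧸ M).out)) ^ m = 1 := by
      intro t ht
      rw [← map_pow]
      exact (QuotientGroup.eq_one_iff _).mpr (hMV (houtP t ht))
    have hNcentV : ∀ g ∈ N, ψ g ∈ Subgroup.center (G ⧸ V) := by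
      intro g hg
      rw [Subgroup.mem_center_iff]
      intro q
      obtain ⟨h, rfl⟩ := QuotientGroup.mk'_surjective V q
      rw [← map_mul, ← map_mul, (Subgroup.mem_center_iff.mp (hcentral hg)) h]
    set f : Fin k → G ⧸ V := fun i => ψ ((xi i : G)) with hfdef
    have hfcent : ∀ i, f i ∈ Subgroup.center (G ⧸ V) :=
      fun i => hNcentV _ (hNiN i (xi i).2)
    have hNim : ∀ g ∈ N, ψ g ∈ Subgroup.closure (Set.range f) := by
      intro g hg
      set W : Subgroup G := Subgroup.comap ψ (Subgroup.closure (Set.range f)) with hWdef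
      have hVW : V ≤ W := by
        intro v hv
        have h1 : ψ v = 1 := (QuotientGroup.eq_one_iff v).mpr hv
        show ψ v ∈ Subgroup.closure (Set.range f)
        rw [h1]; exact Subgroup.one_mem _
      have hWopen : IsOpen (W : Set G) := Subgroup.isOpen_mono hVW hVopen
      have hWclosed : IsClosed (W : Set G) := W.isClosed_of_isOpen hWopen
      have hNW : N ≤ W := by
        rw [← hsup]
        apply iSup_le
        intro i
        refine le_trans (hNile i) (Subgroup.topologicalClosure_minimal _ ?_ hWclosed)
        rw [Subgroup.zpowers_le]
        exact Subgroup.subset_closure ⟨i, rfl⟩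
      exact hNW hg
    -- pigeonhole over cosets of N
    haveI : Fintype (G ⧸ N) := Fintype.ofFinite _
    have hcardN : (Finset.univ : Finset (G ⧸ N)).card = m := by
      rw [Finset.card_univ, ← Nat.card_eq_fintype_card, ← Subgroup.index_eq_card]
    obtain ⟨b, -, hb⟩ := Finset.exists_lt_card_fiber_of_mul_lt_card_of_maps_to
      (f := fun t : G ⧸ M => (QuotientGroup.mk t.out : G ⧸ N)) (n := m ^ k)
      (t := (Finset.univ : Finset (G ⧸ N)))
      (fun a _ => Finset.mem_univ _)
      (by rw [hcardN, hscard]; omega)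
    set s' := s.filter fun t : G ⧸ M => (QuotientGroup.mk t.out : G ⧸ N) = b with hs'def
    obtain ⟨t₀, ht₀⟩ := Finset.card_pos.mp (lt_of_le_of_lt (Nat.zero_le _) hb)
    have hs's : s' ⊆ s := Finset.filter_subset _ _
    have hsameN : ∀ t ∈ s', ((t₀ : G ⧸ M).out)⁻¹ * t.out ∈ N := by
      intro t ht
      have h1 := (Finset.mem_filter.mp ht₀).2
      have h2 := (Finset.mem_filter.mp ht).2
      rw [← QuotientGroup.eq (s := N)]
      rw [h1, h2]
    -- the injection into the torsion set
    set Tor := {a : G ⧸ V // a ∈ Subgroup.closure (Set.range f) ∧ a ^ m = 1} with hTor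
    have θdef : ∀ t : ↥s', ((ψ (t₀.out))⁻¹ * ψ ((t : G ⧸ M).out)) ∈
        Subgroup.closure (Set.range f) ∧ ((ψ (t₀.out))⁻¹ * ψ ((t : G ⧸ M).out)) ^ m = 1 := by
      rintro ⟨t, ht⟩
      have hnN : (t₀.out)⁻¹ * t.out ∈ N := hsameN t ht
      have hψn : ψ ((t₀.out)⁻¹ * t.out) = (ψ (t₀.out))⁻¹ * ψ (t.out) := by
        rw [map_mul, map_inv]
      constructor
      · rw [← hψn]; exact hNim _ hnN
      · have hcomm : Commute (ψ (t₀.out)) (ψ ((t₀.out)⁻¹ * t.out)) :=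
          (Subgroup.mem_center_iff.mp (hNcentV _ hnN)) (ψ (t₀.out))
        have heq : ψ (t₀.out) * ψ ((t₀.out)⁻¹ * t.out) = ψ (t.out) := by
          rw [← map_mul, mul_inv_cancel_left]
        have hpoweq := hcomm.mul_pow m
        rw [heq, htor t (hs's ht), htor t₀ (hs's ht₀)] at hpoweq
        rw [← hψn]
        rw [one_mul] at hpoweq
        exact hpoweq.symm
    set θ : ↥s' → Tor := fun t => ⟨_, θdef t⟩ with hθdef
    have hθinj : Function.Injective θ := by
      rintro ⟨t, ht⟩ ⟨t', ht'⟩ hθeq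
      have : (ψ (t₀.out))⁻¹ * ψ ((t : G ⧸ M).out) = (ψ (t₀.out))⁻¹ * ψ ((t' : G ⧸ M).out) :=
        congrArg Subtype.val hθeq
      have heq2 : ψ ((t : G ⧸ M).out) = ψ ((t' : G ⧸ M).out) := mul_left_cancel this
      by_contra hne
      exact hsep t (hs's ht) t' (hs's ht') (by simpa using hne) heq2
    have hcount : s'.card ≤ m ^ k := by
      calc s'.card = Fintype.card ↥s' := (Fintype.card_coe s').symm
        _ = Nat.card ↥s' := (Nat.card_eq_fintype_card).symm
        _ ≤ Nat.card Tor := Nat.card_le_card_of_injective θ hθinj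
        _ ≤ m ^ k := torsion_bound hm0 k (G ⧸ V) inferInstance inferInstance f hfcent
    omega
  -- conclusion
  set F : Set G := (fun t : G ⧸ M => t.out) '' Ttil with hFdef
  have hFfin : F.Finite := Tfin.image _
  have key : ∀ K₁ ∈ {K : Subgroup G | IsClosed (K : Set G) ∧ K ⊓ N = H ⊓ N},
      ∀ K₂ ∈ {K : Subgroup G | IsClosed (K : Set G) ∧ K ⊓ N = H ⊓ N},
      (K₁ : Set G) ∩ F = (K₂ : Set G) ∩ F → K₁ ≤ K₂ := by
    intro K₁ hK₁ K₂ hK₂ heq x hx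
    have hMK : ∀ K : Subgroup G, K ⊓ N = H ⊓ N → M ≤ K := by
      intro K hK y hy
      rw [hMdef, ← hK] at hy
      exact hy.1
    have hxP : x ∈ P := by
      show x ^ m ∈ M
      rw [hMdef, ← hK₁.2]
      exact ⟨pow_mem hx m, hpow x⟩
    have hmkT : (QuotientGroup.mk x : G ⧸ M) ∈ Ttil := ⟨x, hxP, rfl⟩
    set gx : G := (QuotientGroup.mk x : G ⧸ M).out with hgx
    have hgxF : gx ∈ F := ⟨_, hmkT, rfl⟩
    have hxgx : x⁻¹ * gx ∈ M := by
      rw [← QuotientGroup.eq (s := M)]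
      exact (QuotientGroup.out_eq' _).symm
    have hgxK₁ : gx ∈ K₁ := by
      have : x * (x⁻¹ * gx) ∈ K₁ := mul_mem hx (hMK K₁ hK₁.2 hxgx)
      simpa using this
    have hgxmem : gx ∈ (K₁ : Set G) ∩ F := ⟨hgxK₁, hgxF⟩
    rw [heq] at hgxmem
    have hgxK₂ : gx ∈ K₂ := hgxmem.1
    have : gx * (x⁻¹ * gx)⁻¹ ∈ K₂ := mul_mem hgxK₂ (inv_mem (hMK K₂ hK₂.2 hxgx))
    simpa [mul_assoc] using this
  apply Set.Finite.of_finite_image (f := fun K : Subgroup G => ((K : Set G) ∩ F : Set G))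
  · apply Set.Finite.subset hFfin.finite_subsets
    rintro S ⟨K, hK, rfl⟩
    exact Set.inter_subset_right
  · intro K₁ h₁ K₂ h₂ heq
    exact le_antisymm (key K₁ h₁ K₂ h₂ heq) (key K₂ h₂ K₁ h₁ heq.symm)
end
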